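/- Suppose that, regarding G as a transitive subgroup of the symmetric group S_d (via its left regular action on itself, identified with the action on the d conjugate roots of F), G is contained in the alternating group A_d. Then for every integer i ≥ 0, a_{K_j,i} = (1/det Γ_ξ) · Tr_{L/ℚ}( ξ^i · Σ_{τ∈K_j} ∂_τ(ξ) ), where Tr_{L/ℚ}(η) = Σ_{σ∈G} σ(η). -/

import Mathlib

open scoped BigOperators

/-- The group matrix `Γ = [X_{στ⁻¹}]` of a finite group `G`, over `ℚ[X_σ : σ ∈ G]`. -/
noncomputable def groupMatrix (G : Type*) [Group G] [Fintype G] [DecidableEq G] :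
    Matrix G G (MvPolynomial G ℚ) :=
  Matrix.of fun σ τ : G => MvPolynomial.X (σ * τ⁻¹)

/-- `∂_τ = (1/|G|) ∂(det Γ)/∂X_τ`. -/
noncomputable def groupDetDeriv (G : Type*) [Group G] [Fintype G] [DecidableEq G] (τ : G) :
    MvPolynomial G ℚ :=
  ((Fintype.card G : ℚ))⁻¹ • MvPolynomial.pderiv τ (groupMatrix G).det

private lemma derivation_finset_prod' {R A ι : Type*} [CommRing R] [CommRing A] [Algebra R A]
    [DecidableEq ι] (D : Derivation R A A) (s : Finset ι) (f : ι → A) :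
    D (∏ i ∈ s, f i) = ∑ i ∈ s, (∏ j ∈ s.erase i, f j) * D (f i) := by
  induction s using Finset.induction_on with
  | empty => simp
  | @insert a s ha ih =>
    rw [Finset.prod_insert ha, D.leibniz, ih, smul_eq_mul, smul_eq_mul, Finset.mul_sum,
      Finset.sum_insert ha, Finset.erase_insert ha, add_comm]
    congr 1
    refine Finset.sum_congr rfl fun i hi => ?_
    have hai : a ≠ i := fun h => ha (h ▸ hi)
    rw [Finset.erase_insert_of_ne hai,
      Finset.prod_insert (fun h => ha (Finset.mem_of_mem_erase h)), mul_assoc]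

private lemma derivation_det' {n R A : Type*} [Fintype n] [DecidableEq n] [CommRing R] [CommRing A]
    [Algebra R A] (D : Derivation R A A) (M : Matrix n n A) :
    D M.det = ∑ i, ∑ j, M.adjugate i j * D (M j i) := by
  have step1 : D M.det = ∑ i, (M.updateCol i fun k => D (M k i)).det := by
    rw [Matrix.det_apply, map_sum]
    have h1 : ∀ σ : Equiv.Perm n,
        D (Equiv.Perm.sign σ • ∏ i, M (σ i) i)
          = ∑ i, Equiv.Perm.sign σ •
              ((∏ j ∈ Finset.univ.erase i, M (σ j) j) * D (M (σ i) i)) := by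
      intro σ
      rw [Units.smul_def, map_zsmul, derivation_finset_prod' D Finset.univ (fun i => M (σ i) i),
        Finset.smul_sum]
      simp [Units.smul_def]
    calc ∑ σ : Equiv.Perm n, D (Equiv.Perm.sign σ • ∏ i, M (σ i) i)
        = ∑ σ : Equiv.Perm n, ∑ i, Equiv.Perm.sign σ •
            ((∏ j ∈ Finset.univ.erase i, M (σ j) j) * D (M (σ i) i)) :=
          Finset.sum_congr rfl fun σ _ => h1 σ
      _ = ∑ i, ∑ σ : Equiv.Perm n, Equiv.Perm.sign σ •
            ((∏ j ∈ Finset.univ.erase i, M (σ j) j) * D (M (σ i) i)) := Finset.sum_comm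
      _ = ∑ i, (M.updateCol i fun k => D (M k i)).det := by
          refine Finset.sum_congr rfl fun i _ => ?_
          rw [Matrix.det_apply]
          refine Finset.sum_congr rfl fun σ _ => ?_
          congr 1
          rw [← Finset.mul_prod_erase Finset.univ
            (fun j => (M.updateCol i fun k => D (M k i)) (σ j) j) (Finset.mem_univ i),
            Matrix.updateCol_self, mul_comm]
          congr 1
          exact Finset.prod_congr rfl fun j hj =>
            (Matrix.updateCol_ne (Finset.ne_of_mem_erase hj)).symm
  rw [step1]
  refine Finset.sum_congr rfl fun i _ => ?_
  rw [← Matrix.cramer_apply, Matrix.cramer_eq_adjugate_mulVec]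
  simp [Matrix.mulVec, dotProduct]

private lemma groupDetDeriv_eq_adjugate {G : Type*} [Group G] [Fintype G] [DecidableEq G]
    (τ : G) : groupDetDeriv G τ = (groupMatrix G).adjugate 1 τ := by
  have h := derivation_det' (MvPolynomial.pderiv τ) (groupMatrix G)
  have hent : ∀ i j : G, (MvPolynomial.pderiv τ) (groupMatrix G j i)
      = if j = τ * i then 1 else 0 := by
    intro i j
    simp only [groupMatrix, Matrix.of_apply, MvPolynomial.pderiv_X]
    rw [Pi.single_apply]
    exact if_congr (by rw [mul_inv_eq_iff_eq_mul]) rfl rfl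
  have h2 : ∀ i : G, (∑ j : G, (groupMatrix G).adjugate i j
      * (MvPolynomial.pderiv τ) (groupMatrix G j i)) = (groupMatrix G).adjugate 1 τ := by
    intro i
    rw [Finset.sum_congr rfl fun j _ => by rw [hent i j]]
    simp only [mul_ite, mul_one, mul_zero, Finset.sum_ite_eq', Finset.mem_univ, if_true]
    -- adj i (τ * i) = adj 1 τ
    have hsub : (groupMatrix G).submatrix (Equiv.mulRight i) (Equiv.mulRight i)
        = groupMatrix G := by
      ext a b
      simp only [Matrix.submatrix_apply, groupMatrix, Matrix.of_apply, Equiv.coe_mulRight]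
      congr 1
      group
    have hadj := Matrix.adjugate_submatrix_equiv_self (Equiv.mulRight i) (groupMatrix G)
    rw [hsub] at hadj
    conv_rhs => rw [hadj]
    simp
  rw [groupDetDeriv, h, Finset.sum_congr rfl fun i _ => h2 i, Finset.sum_const,
    Finset.card_univ, ← Nat.cast_smul_eq_nsmul ℚ, smul_smul, inv_mul_cancel₀, one_smul]
  exact Nat.cast_ne_zero.2 Fintype.card_ne_zero

set_option maxHeartbeats 1000000 in
/-- Suppose that `G = Gal(L/ℚ)`, viewed as a permutation group via its left regular
action, is contained in the alternating group, i.e. left multiplication by every `γ ∈ G`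
is an even permutation of `G`.  Then for every `i ≥ 0`,
`a_{K,i} = (1/det Γ_ξ) · Tr_{L/ℚ}(ξ^i Σ_{τ∈K} ∂_τ(ξ))`, where `(a_{K,i})_i ∈ RS(F,ℚ)` is
the sequence whose first `d` terms are the column of `P Γ_ξ⁻¹ κ` corresponding to the
conjugacy class `K`, and `Tr_{L/ℚ}(η) = Σ_{σ∈G} σ(η)`. -/
theorem stmt2 (L : Type*) [Field L] [CharZero L] [FiniteDimensional ℚ L] [IsGalois ℚ L]
    [DecidableEq (L ≃ₐ[ℚ] L)]
    (d : ℕ) (hd : 0 < d) (hdeg : Module.finrank ℚ L = d)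
    (c : Fin d → ℤ) (F : Polynomial ℤ)
    (hF : F = Polynomial.X ^ d + ∑ j : Fin d, Polynomial.C (c j) * Polynomial.X ^ (j : ℕ))
    (hFirr : Irreducible (F.map (Int.castRingHom ℚ)))
    (ξ : L) (hξ : Polynomial.aeval ξ F = 0)
    (hNB : ∃ b : Module.Basis (L ≃ₐ[ℚ] L) ℚ L, ∀ σ : L ≃ₐ[ℚ] L, b σ = σ ξ)
    (hAlt : ∀ γ : L ≃ₐ[ℚ] L, Equiv.Perm.sign (Equiv.mulLeft γ) = 1)
    (K : ConjClasses (L ≃ₐ[ℚ] L)) [DecidablePred (· ∈ K.carrier)]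
    (a : ℕ → ℚ)
    (ha : ∀ i, a (i + d) = -∑ j : Fin d, (c j : ℚ) * a (i + (j : ℕ)))
    (hinit : ∀ i : Fin d, algebraMap ℚ L (a (i : ℕ)) =
      ∑ σ : L ≃ₐ[ℚ] L, (σ⁻¹ ξ) ^ (i : ℕ) *
        ((Matrix.of fun σ' τ' : L ≃ₐ[ℚ] L => (σ' * τ'⁻¹) ξ)⁻¹.mulVec
          (fun τ : L ≃ₐ[ℚ] L => if τ ∈ K.carrier then (1 : L) else 0)) σ) :
    ∀ i : ℕ, algebraMap ℚ L (a i) =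
      ((Matrix.of fun σ' τ' : L ≃ₐ[ℚ] L => (σ' * τ'⁻¹) ξ).det)⁻¹ *
        ∑ σ : L ≃ₐ[ℚ] L,
          σ (ξ ^ i * ∑ τ : L ≃ₐ[ℚ] L,
            if τ ∈ K.carrier then
              MvPolynomial.aeval (fun ρ : L ≃ₐ[ℚ] L => ρ ξ) (groupDetDeriv _ τ)
            else 0) := by
  obtain ⟨bb, hbb⟩ := hNB
  set M : Matrix (L ≃ₐ[ℚ] L) (L ≃ₐ[ℚ] L) L :=
    Matrix.of fun σ' τ' : L ≃ₐ[ℚ] L => (σ' * τ'⁻¹) ξ with hM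
  set v : (L ≃ₐ[ℚ] L) → L := fun τ : L ≃ₐ[ℚ] L => if τ ∈ K.carrier then (1 : L) else 0 with hv
  have hMapp : ∀ a b : L ≃ₐ[ℚ] L, M a b = (a * b⁻¹) ξ := fun _ _ => rfl
  -- shift property of the adjugate under the Galois action
  have hshift : ∀ ρ τ : L ≃ₐ[ℚ] L, ρ (M.adjugate 1 τ) = M.adjugate 1 (ρ * τ) := by
    intro ρ τ
    have hmap : (ρ.toAlgHom.mapMatrix M : Matrix _ _ L)
        = (Equiv.mulLeft ρ).toPEquiv.toMatrix * M := by
      rw [PEquiv.toMatrix_toPEquiv_mul]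
      ext a b
      simp only [AlgHom.mapMatrix_apply, Matrix.map_apply, Matrix.submatrix_apply, id_eq,
        AlgEquiv.toAlgHom_eq_coe, AlgHom.coe_coe, Equiv.coe_mulLeft, hMapp]
      change ρ ((a * b⁻¹) ξ) = _
      rw [← AlgEquiv.mul_apply, mul_assoc]
    have hadj := AlgHom.map_adjugate ρ.toAlgHom M
    have hPdet : ((Equiv.mulLeft ρ).toPEquiv.toMatrix : Matrix _ _ L).det = 1 := by
      have h := Matrix.det_permutation (R := L) (Equiv.mulLeft ρ)
      rw [hAlt ρ] at h
      simpa using h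
    have hQP : ((Equiv.mulLeft ρ).symm.toPEquiv.toMatrix : Matrix _ _ L)
        * (Equiv.mulLeft ρ).toPEquiv.toMatrix = 1 := by
      rw [PEquiv.toMatrix_toPEquiv_mul]
      ext a b
      simp [PEquiv.toMatrix_apply, Equiv.toPEquiv_apply, Matrix.one_apply,
        Matrix.submatrix_apply, eq_comm]
    have hadjP : Matrix.adjugate ((Equiv.mulLeft ρ).toPEquiv.toMatrix : Matrix _ _ L)
        = (Equiv.mulLeft ρ).symm.toPEquiv.toMatrix := by
      calc Matrix.adjugate ((Equiv.mulLeft ρ).toPEquiv.toMatrix : Matrix _ _ L)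
          = (((Equiv.mulLeft ρ).symm.toPEquiv.toMatrix : Matrix _ _ L)
              * (Equiv.mulLeft ρ).toPEquiv.toMatrix)
            * Matrix.adjugate ((Equiv.mulLeft ρ).toPEquiv.toMatrix : Matrix _ _ L) := by
            rw [hQP, one_mul]
        _ = ((Equiv.mulLeft ρ).symm.toPEquiv.toMatrix : Matrix _ _ L)
            * (((Equiv.mulLeft ρ).toPEquiv.toMatrix : Matrix _ _ L)
              * Matrix.adjugate ((Equiv.mulLeft ρ).toPEquiv.toMatrix : Matrix _ _ L)) := by
            rw [Matrix.mul_assoc]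
        _ = (Equiv.mulLeft ρ).symm.toPEquiv.toMatrix := by
            rw [Matrix.mul_adjugate, hPdet, one_smul, Matrix.mul_one]
    have hfin : ρ.toAlgHom.mapMatrix M.adjugate
        = M.adjugate * (Equiv.mulLeft ρ).symm.toPEquiv.toMatrix := by
      rw [hadj, hmap, Matrix.adjugate_mul_distrib, hadjP]
    calc ρ (M.adjugate 1 τ) = (ρ.toAlgHom.mapMatrix M.adjugate) 1 τ := by
          simp [AlgHom.mapMatrix_apply, Matrix.map_apply]
      _ = ((M.adjugate * (Equiv.mulLeft ρ).symm.toPEquiv.toMatrix :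
            Matrix (L ≃ₐ[ℚ] L) (L ≃ₐ[ℚ] L) L)) 1 τ := by rw [hfin]
      _ = M.adjugate 1 (ρ * τ) := by
          rw [PEquiv.mul_toMatrix_toPEquiv]
          simp [Matrix.submatrix_apply]
  -- right invariance of the adjugate
  have hrt : ∀ g a b : L ≃ₐ[ℚ] L, M.adjugate (a * g) (b * g) = M.adjugate a b := by
    intro g a b
    have hsub : M.submatrix (Equiv.mulRight g) (Equiv.mulRight g) = M := by
      ext x y
      simp only [Matrix.submatrix_apply, Equiv.coe_mulRight, hMapp]
      congr 1
      group
    have h := Matrix.adjugate_submatrix_equiv_self (Equiv.mulRight g) M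
    rw [hsub] at h
    conv_rhs => rw [h]
    simp
  -- the element S
  obtain ⟨S, hS⟩ : ∃ S : L, S = ∑ τ : L ≃ₐ[ℚ] L, if τ ∈ K.carrier then M.adjugate 1 τ else 0 :=
    ⟨_, rfl⟩
  have hτS : ∀ τ : L ≃ₐ[ℚ] L,
      τ S = ∑ u : L ≃ₐ[ℚ] L, if u ∈ K.carrier then M.adjugate 1 (τ * u) else 0 := by
    intro τ
    rw [hS, map_sum]
    refine Finset.sum_congr rfl fun u _ => ?_
    rw [apply_ite τ, map_zero, hshift]
  -- conjugation-invariance of K.carrier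
  have hKmem : ∀ s u : L ≃ₐ[ℚ] L, (s * u * s⁻¹ ∈ K.carrier) ↔ u ∈ K.carrier := by
    intro s u
    rw [ConjClasses.mem_carrier_iff_mk_eq, ConjClasses.mem_carrier_iff_mk_eq,
      show ConjClasses.mk (s * u * s⁻¹) = ConjClasses.mk u from
        (ConjClasses.mk_eq_mk_iff_isConj.2 (isConj_iff.2 ⟨s, rfl⟩)).symm]
  -- the Frobenius-type identity
  have hkey : ∀ g : L ≃ₐ[ℚ] L,
      (∑ s : L ≃ₐ[ℚ] L, (g * s) ξ * M.adjugate 1 s) = if g = 1 then M.det else 0 := by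
    intro g
    have h1 : (∑ s : L ≃ₐ[ℚ] L, M g s * M.adjugate s 1)
        = ∑ s : L ≃ₐ[ℚ] L, (g * s) ξ * M.adjugate 1 s := by
      refine Fintype.sum_equiv (Equiv.inv _) _ _ fun s => ?_
      simp only [Equiv.inv_apply, hMapp]
      congr 1
      simpa using hrt s 1 s⁻¹
    rw [← h1, show (∑ s : L ≃ₐ[ℚ] L, M g s * M.adjugate s 1) = (M * M.adjugate) g 1 from
      (Matrix.mul_apply).symm, Matrix.mul_adjugate]
    simp [Matrix.one_apply]
  -- the main vector identity
  have hMw : M.mulVec (fun σ : L ≃ₐ[ℚ] L => σ⁻¹ S) = fun σ => M.det * v σ := by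
    funext σ
    have expand : M.mulVec (fun σ : L ≃ₐ[ℚ] L => σ⁻¹ S) σ
        = ∑ τ : L ≃ₐ[ℚ] L, M σ τ * τ⁻¹ S := by
      simp [Matrix.mulVec, dotProduct]
    rw [expand]
    have e1 : ∀ τ : L ≃ₐ[ℚ] L, M σ τ * τ⁻¹ S
        = ∑ u : L ≃ₐ[ℚ] L, if u ∈ K.carrier
            then (σ * τ⁻¹) ξ * M.adjugate 1 (τ⁻¹ * u) else 0 := by
      intro τ
      rw [hτS τ⁻¹, Finset.mul_sum]
      refine Finset.sum_congr rfl fun u _ => ?_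
      rw [mul_ite, mul_zero, hMapp]
    calc ∑ τ : L ≃ₐ[ℚ] L, M σ τ * τ⁻¹ S
        = ∑ τ : L ≃ₐ[ℚ] L, ∑ u : L ≃ₐ[ℚ] L, (if u ∈ K.carrier
            then (σ * τ⁻¹) ξ * M.adjugate 1 (τ⁻¹ * u) else 0) :=
          Finset.sum_congr rfl fun τ _ => e1 τ
      _ = ∑ u : L ≃ₐ[ℚ] L, ∑ τ : L ≃ₐ[ℚ] L, (if u ∈ K.carrier
            then (σ * τ⁻¹) ξ * M.adjugate 1 (τ⁻¹ * u) else 0) := Finset.sum_comm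
      _ = ∑ u : L ≃ₐ[ℚ] L, ∑ s : L ≃ₐ[ℚ] L, (if u ∈ K.carrier
            then (σ * s * u⁻¹) ξ * M.adjugate 1 s else 0) := by
          refine Finset.sum_congr rfl fun u _ => ?_
          refine Fintype.sum_equiv ((Equiv.inv (L ≃ₐ[ℚ] L)).trans (Equiv.mulRight u)) _ _
            fun τ => ?_
          simp only [Equiv.trans_apply, Equiv.inv_apply, Equiv.coe_mulRight]
          refine if_congr Iff.rfl ?_ rfl
          have hgr : σ * τ⁻¹ = σ * (τ⁻¹ * u) * u⁻¹ := by group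
          rw [← hgr]
      _ = ∑ s : L ≃ₐ[ℚ] L, ∑ u : L ≃ₐ[ℚ] L, (if u ∈ K.carrier
            then (σ * s * u⁻¹) ξ * M.adjugate 1 s else 0) := Finset.sum_comm
      _ = ∑ s : L ≃ₐ[ℚ] L, ∑ u : L ≃ₐ[ℚ] L, (if u ∈ K.carrier
            then (σ * u⁻¹ * s) ξ * M.adjugate 1 s else 0) := by
          refine Finset.sum_congr rfl fun s _ => ?_
          refine Fintype.sum_equiv (MulAut.conj s).toEquiv _ _ fun u => ?_
          have hc : (MulAut.conj s).toEquiv u = s * u * s⁻¹ := rfl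
          rw [hc]
          have hgr : σ * s * u⁻¹ = σ * (s * u * s⁻¹)⁻¹ * s := by group
          rw [← hgr]
          simp only [hKmem]
      _ = ∑ u : L ≃ₐ[ℚ] L, ∑ s : L ≃ₐ[ℚ] L, (if u ∈ K.carrier
            then (σ * u⁻¹ * s) ξ * M.adjugate 1 s else 0) := Finset.sum_comm
      _ = ∑ u : L ≃ₐ[ℚ] L, (if u ∈ K.carrier then (if σ * u⁻¹ = 1 then M.det else 0) else 0) := by
          refine Finset.sum_congr rfl fun u _ => ?_
          by_cases h : u ∈ K.carrier
          · simp only [if_pos h]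
            exact hkey (σ * u⁻¹)
          · simp only [if_neg h, Finset.sum_const_zero]
      _ = M.det * v σ := by
          simp only [mul_inv_eq_one]
          rw [Finset.sum_congr rfl (fun u _ => show (if u ∈ K.carrier
              then (if σ = u then M.det else 0) else 0)
              = (if σ = u then (if u ∈ K.carrier then M.det else 0) else 0) by
            split_ifs <;> rfl)]
          rw [Finset.sum_ite_eq]
          simp [hv, mul_ite]
  -- nonvanishing of the determinant
  have hdet : M.det ≠ 0 := by
    intro h0
    obtain ⟨v0, hv0ne, hv0⟩ := Matrix.exists_vecMul_eq_zero_iff.mpr h0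
    have hchar : ∀ x : L, ∑ σ : L ≃ₐ[ℚ] L, v0 σ * σ x = 0 := by
      intro x
      have hrep := bb.sum_repr x
      calc ∑ σ : L ≃ₐ[ℚ] L, v0 σ * σ x
          = ∑ σ : L ≃ₐ[ℚ] L, v0 σ * σ (∑ ρ, bb.repr x ρ • bb ρ) := by rw [hrep]
        _ = ∑ σ : L ≃ₐ[ℚ] L, ∑ ρ, bb.repr x ρ • (v0 σ * σ (bb ρ)) := by
            refine Finset.sum_congr rfl fun σ _ => ?_
            rw [map_sum, Finset.mul_sum]
            refine Finset.sum_congr rfl fun ρ _ => ?_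
            rw [Algebra.smul_def, map_mul, AlgEquiv.commutes, ← Algebra.smul_def]
            exact mul_smul_comm _ _ _
        _ = ∑ ρ, bb.repr x ρ • ∑ σ : L ≃ₐ[ℚ] L, v0 σ * σ (bb ρ) := by
            rw [Finset.sum_comm]
            exact Finset.sum_congr rfl fun ρ _ => (Finset.smul_sum).symm
        _ = 0 := by
            refine Finset.sum_eq_zero fun ρ _ => ?_
            have h2 := congrFun hv0 ρ⁻¹
            have h3 : ∑ σ : L ≃ₐ[ℚ] L, v0 σ * σ (bb ρ) = 0 := by
              rw [show (0 : (L ≃ₐ[ℚ] L) → L) ρ⁻¹ = 0 from rfl] at h2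
              rw [← h2]
              simp only [Matrix.vecMul, dotProduct, hMapp]
              refine Finset.sum_congr rfl fun σ _ => ?_
              rw [hbb ρ, inv_inv, AlgEquiv.mul_apply]
            rw [h3, smul_zero]
    have li : LinearIndependent L (fun σ : L ≃ₐ[ℚ] L => (σ : L → L)) := by
      have h := linearIndependent_monoidHom L L
      have hinj : Function.Injective
          (fun σ : L ≃ₐ[ℚ] L => (MonoidHomClass.toMonoidHom σ : L →* L)) := by
        intro σ τ hst
        exact AlgEquiv.ext fun x => DFunLike.congr_fun hst x
      exact h.comp _ hinj
    rw [Fintype.linearIndependent_iff] at li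
    refine hv0ne (funext fun σ => li v0 ?_ σ)
    funext x
    simpa [Finset.sum_apply] using hchar x
  have hdetu : IsUnit M.det := isUnit_iff_ne_zero.2 hdet
  -- invert the vector identity
  have hInvp : ∀ σ : L ≃ₐ[ℚ] L, (M⁻¹.mulVec v) σ = M.det⁻¹ * σ⁻¹ S := by
    have h1 : M⁻¹.mulVec (M.mulVec (fun σ : L ≃ₐ[ℚ] L => σ⁻¹ S))
        = fun σ : L ≃ₐ[ℚ] L => σ⁻¹ S := by
      rw [Matrix.mulVec_mulVec, Matrix.nonsing_inv_mul M hdetu, Matrix.one_mulVec]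
    rw [hMw] at h1
    have h2 : (fun σ : L ≃ₐ[ℚ] L => M.det * v σ) = M.det • v := by
      funext σ; simp [smul_eq_mul]
    rw [h2, Matrix.mulVec_smul] at h1
    intro σ
    have h3 := congrFun h1 σ
    rw [Pi.smul_apply, smul_eq_mul] at h3
    rw [← h3, ← mul_assoc, inv_mul_cancel₀ hdet, one_mul]
  -- base case
  have hbase : ∀ i : ℕ, i < d →
      algebraMap ℚ L (a i) = M.det⁻¹ * ∑ σ : L ≃ₐ[ℚ] L, σ (ξ ^ i * S) := by
    intro i hi
    have h0 := hinit ⟨i, hi⟩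
    rw [show (((⟨i, hi⟩ : Fin d) : ℕ)) = i from rfl] at h0
    rw [h0, Finset.sum_congr rfl fun σ _ => by rw [hInvp σ], Finset.mul_sum]
    refine Fintype.sum_equiv (Equiv.inv (L ≃ₐ[ℚ] L)) _ _ fun σ => ?_
    simp only [Equiv.inv_apply, map_mul, map_pow]
    ring
  -- the power recurrence
  have hxid : ξ ^ d = -∑ j : Fin d, (c j : L) * ξ ^ (j : ℕ) := by
    have h := hξ
    rw [hF] at h
    simp only [map_add, map_pow, Polynomial.aeval_X, map_sum, map_mul, Polynomial.aeval_C,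
      map_intCast, eq_intCast] at h
    exact eq_neg_of_add_eq_zero_left h
  have hstep : ∀ k : ℕ, (M.det⁻¹ * ∑ σ : L ≃ₐ[ℚ] L, σ (ξ ^ (k + d) * S))
      = -∑ j : Fin d, (c j : L) * (M.det⁻¹ * ∑ σ : L ≃ₐ[ℚ] L, σ (ξ ^ (k + (j : ℕ)) * S)) := by
    intro k
    have h1 : ∀ σ : L ≃ₐ[ℚ] L, σ (ξ ^ (k + d) * S)
        = -∑ j : Fin d, (c j : L) * σ (ξ ^ (k + (j : ℕ)) * S) := by
      intro σ
      have hx : ξ ^ (k + d) * S = -∑ j : Fin d, (c j : L) * (ξ ^ (k + (j : ℕ)) * S) := by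
        have hpow : ξ ^ (k + d) = -∑ j : Fin d, (c j : L) * ξ ^ (k + (j : ℕ)) := by
          rw [pow_add, hxid, mul_neg, Finset.mul_sum]
          congr 1
          refine Finset.sum_congr rfl fun j _ => ?_
          rw [pow_add]
          ring
        rw [hpow, neg_mul, Finset.sum_mul]
        congr 1
        refine Finset.sum_congr rfl fun j _ => ?_
        ring
      rw [hx, map_neg, map_sum]
      congr 1
      refine Finset.sum_congr rfl fun j _ => ?_
      rw [map_mul, map_intCast]
    calc M.det⁻¹ * ∑ σ : L ≃ₐ[ℚ] L, σ (ξ ^ (k + d) * S)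
        = M.det⁻¹ * ∑ σ : L ≃ₐ[ℚ] L,
            -∑ j : Fin d, (c j : L) * σ (ξ ^ (k + (j : ℕ)) * S) := by
          rw [Finset.sum_congr rfl fun σ _ => h1 σ]
      _ = -∑ σ : L ≃ₐ[ℚ] L, ∑ j : Fin d,
            M.det⁻¹ * ((c j : L) * σ (ξ ^ (k + (j : ℕ)) * S)) := by
          rw [Finset.mul_sum, ← Finset.sum_neg_distrib]
          refine Finset.sum_congr rfl fun σ _ => ?_
          rw [mul_neg, Finset.mul_sum]
      _ = -∑ j : Fin d, ∑ σ : L ≃ₐ[ℚ] L,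
            M.det⁻¹ * ((c j : L) * σ (ξ ^ (k + (j : ℕ)) * S)) := by rw [Finset.sum_comm]
      _ = -∑ j : Fin d, (c j : L) * (M.det⁻¹ * ∑ σ : L ≃ₐ[ℚ] L, σ (ξ ^ (k + (j : ℕ)) * S)) := by
          congr 1
          refine Finset.sum_congr rfl fun j _ => ?_
          calc ∑ σ : L ≃ₐ[ℚ] L, M.det⁻¹ * ((c j : L) * σ (ξ ^ (k + (j : ℕ)) * S))
              = ∑ σ : L ≃ₐ[ℚ] L, (c j : L) * (M.det⁻¹ * σ (ξ ^ (k + (j : ℕ)) * S)) :=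
                Finset.sum_congr rfl fun σ _ => by ring
            _ = (c j : L) * (M.det⁻¹ * ∑ σ : L ≃ₐ[ℚ] L, σ (ξ ^ (k + (j : ℕ)) * S)) := by
                rw [← Finset.mul_sum, ← Finset.mul_sum]
  -- main induction
  have main : ∀ i : ℕ, algebraMap ℚ L (a i) = M.det⁻¹ * ∑ σ : L ≃ₐ[ℚ] L, σ (ξ ^ i * S) := by
    intro i
    induction i using Nat.strong_induction_on with
    | _ i ih =>
      rcases lt_or_ge i d with hi | hi
      · exact hbase i hi
      · obtain ⟨k, rfl⟩ : ∃ k, i = k + d := ⟨i - d, (Nat.sub_add_cancel hi).symm⟩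
        rw [ha k, hstep k, map_neg, map_sum]
        congr 1
        refine Finset.sum_congr rfl fun j _ => ?_
        rw [map_mul, ih (k + (j : ℕ)) (by have := j.2; omega)]
        congr 1
        exact map_intCast (algebraMap ℚ L) (c j)
  -- conclude
  intro i
  have hS2 : (∑ τ : L ≃ₐ[ℚ] L, if τ ∈ K.carrier then
      MvPolynomial.aeval (fun ρ : L ≃ₐ[ℚ] L => ρ ξ) (groupDetDeriv _ τ) else 0) = S := by
    rw [hS]
    refine Finset.sum_congr rfl fun τ _ => ?_
    refine if_congr Iff.rfl ?_ rfl
    rw [groupDetDeriv_eq_adjugate]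
    have h := AlgHom.map_adjugate
      (MvPolynomial.aeval (R := ℚ) (fun ρ : L ≃ₐ[ℚ] L => ρ ξ)) (groupMatrix (L ≃ₐ[ℚ] L))
    have hmm : (MvPolynomial.aeval (R := ℚ) (fun ρ : L ≃ₐ[ℚ] L => ρ ξ)).mapMatrix
        (groupMatrix (L ≃ₐ[ℚ] L)) = M := by
      ext x y
      simp [groupMatrix, AlgHom.mapMatrix_apply, Matrix.map_apply, hMapp]
    rw [hmm] at h
    calc MvPolynomial.aeval (R := ℚ) (fun ρ : L ≃ₐ[ℚ] L => ρ ξ)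
          ((groupMatrix (L ≃ₐ[ℚ] L)).adjugate 1 τ)
        = ((MvPolynomial.aeval (R := ℚ) (fun ρ : L ≃ₐ[ℚ] L => ρ ξ)).mapMatrix
            (groupMatrix (L ≃ₐ[ℚ] L)).adjugate) 1 τ := by
          simp [AlgHom.mapMatrix_apply, Matrix.map_apply]
      _ = M.adjugate 1 τ := by rw [h]
  rw [main i, hS2]
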